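/- Given a connection Γ = ∂_t + Γ^i ∂_i on Q → ℝ and a connection K on the tangent bundle TQ → Q with components K^0_λ, K^i_λ, the modified components K̃^0_λ = 0, K̃^i_λ = K^i_λ - Γ^i K^0_λ satisfy the transformation law of a connection on TQ → Q; i.e., K̃ is again a connection on TQ → Q. -/
import Mathlib


/- STATEMENT 11: Given a connection Γ on Q → ℝ and a connection K on TQ → Q, the
   modified components K̃^0_λ = 0, K̃^i_λ = K^i_λ - Γ^i K^0_λ obey the connection
   transformation law on TQ → Q, so K̃ is again a connection. Pointwise data:
   J i j = ∂_j q'^i, Jt i = ∂_t q'^i, P α μ = ∂q^α/∂q'^μ (α, μ ∈ {0,…,m} ≃ Option (Fin m)),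
   D i α = ∂_α q̇'^i; the transformed components K'^0_μ, K'^i_μ, Γ'^i are defined by the
   transformation laws; the conclusion is that K̃'^i_μ := K'^i_μ - Γ'^i K'^0_μ is the
   transform of K̃^i_α = K^i_α - Γ^i K^0_α (the 0-row of K̃' being identically 0). -/
theorem stmt11 (m : ℕ)
    (K0 : Option (Fin m) → ℝ) (Ki : Fin m → Option (Fin m) → ℝ)
    (Γ : Fin m → ℝ) (J : Fin m → Fin m → ℝ) (Jt : Fin m → ℝ)
    (P : Option (Fin m) → Option (Fin m) → ℝ)
    (D : Fin m → Option (Fin m) → ℝ)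
    (K'0 : Option (Fin m) → ℝ) (K'i : Fin m → Option (Fin m) → ℝ) (Γ' : Fin m → ℝ)
    (hK'0 : ∀ μ, K'0 μ = ∑ α, K0 α * P α μ)
    (hK'i : ∀ i μ, K'i i μ =
      ∑ α, (Jt i * K0 α + ∑ j, J i j * Ki j α + D i α) * P α μ)
    (hΓ' : ∀ i, Γ' i = ∑ j, J i j * Γ j + Jt i) :
    ∀ i μ, K'i i μ - Γ' i * K'0 μ =
      ∑ α, (∑ j, J i j * (Ki j α - Γ j * K0 α) + D i α) * P α μ := by
  intro i μ
  simp only [hK'i, hΓ', hK'0, mul_sub, sub_mul, add_mul, Finset.sum_sub_distrib,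
    Finset.sum_add_distrib, Finset.mul_sum, Finset.sum_mul]
  have h : ∀ x, ∑ j, J i j * Γ j * (K0 x * P x μ) = ∑ j, J i j * (Γ j * K0 x) * P x μ := by
    intro x; apply Finset.sum_congr rfl; intro j _; ring
  simp only [h, mul_assoc]
  ring
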